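/- Let L ≥ 1, let T be a real L×L matrix, and let σ_L denote the uniform probability measure on the unit sphere S^{L−1} ⊂ ℝ^L. Then ∬ ⟨u, T v⟩⁴ dσ_L(u) dσ_L(v) = (3/(L²(L+2)²)) · ( 2·tr((TᵀT)²) + (tr(TᵀT))² ). Equivalently, with τ₁, …, τ_L the singular values of T, the left-hand side equals W·(2·Σ_j τ_j⁴ + (Σ_j τ_j²)²), where W = 3/(L²(L+2)²). -/

import Mathlib

open MeasureTheory Metric Matrix
open scoped RealInnerProductSpace
open Real Set Filter


noncomputable def gIk (k : ℕ) : ℝ := ∫ r in Set.Ioi (0:ℝ), r ^ k * Real.exp (-r^2)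

lemma gIk_integrableOn (k : ℕ) :
    IntegrableOn (fun r : ℝ => r ^ k * Real.exp (-r^2)) (Set.Ioi 0) := by
  have h := integrableOn_rpow_mul_exp_neg_mul_sq (b := 1) one_pos
    (s := (k:ℝ)) (lt_of_lt_of_le neg_one_lt_zero (Nat.cast_nonneg k))
  simpa [Real.rpow_natCast, neg_one_mul] using h

lemma gInt (k : ℕ) : Integrable (fun r : ℝ => r ^ k * Real.exp (-r^2)) := by
  have h := integrable_rpow_mul_exp_neg_mul_sq (b := 1) one_pos
    (s := (k:ℝ)) (lt_of_lt_of_le neg_one_lt_zero (Nat.cast_nonneg k))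
  simpa [Real.rpow_natCast, neg_one_mul] using h

lemma gIk_pos (k : ℕ) : 0 < gIk k := by
  rw [gIk]
  refine (setIntegral_pos_iff_support_of_nonneg_ae ?_ (gIk_integrableOn k)).mpr ?_
  · filter_upwards [ae_restrict_mem measurableSet_Ioi] with x hx
    have hx' : (0:ℝ) < x := hx
    positivity
  · have : (Set.Ioi (0:ℝ)) ⊆ Function.support (fun r : ℝ => r ^ k * Real.exp (-r^2)) ∩ Set.Ioi 0 := by
      intro x hx
      refine ⟨?_, hx⟩
      have hx' : (0:ℝ) < x := hx
      simp only [Function.mem_support]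
      positivity
    have h1 : (0:ENNReal) < volume (Set.Ioi (0:ℝ)) := by simp
    exact lt_of_lt_of_le h1 (measure_mono this)

lemma gIk_rec (k : ℕ) : gIk (k+2) = ((k+1:ℝ)/2) * gIk k := by
  set f : ℝ → ℝ := fun x => -(1/2) * (x ^ (k+1) * Real.exp (-x^2)) with hf
  have hderiv : ∀ x : ℝ, HasDerivAt f
      (x^(k+2) * Real.exp (-x^2) - ((k+1:ℝ)/2) * (x^k * Real.exp (-x^2))) x := by
    intro x
    have h1 : HasDerivAt (fun x : ℝ => x ^ (k+1)) ((k+1) * x ^ k) x := by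
      simpa using hasDerivAt_pow (k+1) x
    have h2 : HasDerivAt (fun x : ℝ => Real.exp (-x^2)) (Real.exp (-x^2) * (-(2*x))) x := by
      have : HasDerivAt (fun x : ℝ => -x^2) (-(2*x)) x := by
        simpa [Pi.neg_def] using (hasDerivAt_pow 2 x).neg
      exact this.exp
    have := ((h1.mul h2).const_mul (-(1/2) : ℝ))
    exact this.congr_deriv (by ring)
  have hint : IntegrableOn (fun x : ℝ =>
      x^(k+2) * Real.exp (-x^2) - ((k+1:ℝ)/2) * (x^k * Real.exp (-x^2))) (Set.Ioi 0) := by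
    exact (gIk_integrableOn (k+2)).sub ((gIk_integrableOn k).const_mul _)
  have htend : Tendsto f atTop (nhds 0) := by
    have hbound : ∀ᶠ x in atTop, ‖(x:ℝ) ^ (k+1) * Real.exp (-x^2)‖ ≤ x ^ (k+1) * Real.exp (-x) := by
      filter_upwards [eventually_ge_atTop (1:ℝ)] with x hx
      have hx0 : (0:ℝ) ≤ x := by linarith
      rw [Real.norm_eq_abs, abs_mul, abs_of_nonneg (by positivity), abs_of_nonneg (Real.exp_pos _).le]
      gcongr
      nlinarith
    have h0 : Tendsto (fun x : ℝ => x ^ (k+1) * Real.exp (-x)) atTop (nhds 0) := by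
      simpa [div_eq_mul_inv, Real.exp_neg] using tendsto_pow_mul_exp_neg_atTop_nhds_zero (k+1)
    have : Tendsto (fun x : ℝ => (x:ℝ) ^ (k+1) * Real.exp (-x^2)) atTop (nhds 0) := by
      apply squeeze_zero_norm' hbound h0
    simpa [hf] using (this.const_mul (-(1/2) : ℝ))
  have key := integral_Ioi_of_hasDerivAt_of_tendsto' (f := f)
    (fun x _ => hderiv x) hint htend
  have h0 : f 0 = 0 := by simp [hf]
  rw [h0, sub_zero] at key
  have hsplit : ∫ x in Set.Ioi (0:ℝ),
      (x^(k+2) * Real.exp (-x^2) - ((k+1:ℝ)/2) * (x^k * Real.exp (-x^2)))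
      = gIk (k+2) - ((k+1:ℝ)/2) * gIk k := by
    rw [integral_sub (gIk_integrableOn (k+2)) ((gIk_integrableOn k).const_mul _),
      integral_const_mul]
    rfl
  rw [hsplit] at key
  linarith

noncomputable def gM (n : ℕ) : ℝ := ∫ x : ℝ, x ^ n * Real.exp (-x^2)

lemma gM_eq (n : ℕ) : gM n = (1 + (-1:ℝ)^n) * gIk n := by
  have hsplit : gM n = (∫ x in Set.Iic (0:ℝ), x ^ n * Real.exp (-x^2)) + gIk n := by
    rw [gM, ← intervalIntegral.integral_Iic_add_Ioi ((gInt n).integrableOn) ((gInt n).integrableOn)]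
    rfl
  have hneg : (∫ x in Set.Iic (0:ℝ), x ^ n * Real.exp (-x^2)) = (-1:ℝ)^n * gIk n := by
    have := integral_comp_neg_Iic (0:ℝ) (fun x => (-x) ^ n * Real.exp (-(-x)^2))
    simp only [neg_neg, neg_zero] at this
    rw [this, gIk, ← integral_const_mul]
    apply setIntegral_congr_fun measurableSet_Ioi
    intro x _
    rw [neg_pow]
    ring_nf
  rw [hsplit, hneg]; ring

lemma gM_zero_pos : 0 < gM 0 := by
  rw [gM_eq]; simpa using gIk_pos 0

lemma gM_one : gM 1 = 0 := by rw [gM_eq]; norm_num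
lemma gM_three : gM 3 = 0 := by rw [gM_eq]; norm_num
lemma gM_two : gM 2 = gM 0 / 2 := by
  rw [gM_eq, gM_eq]
  have := gIk_rec 0
  norm_num at this ⊢
  rw [this]; ring
lemma gM_four : gM 4 = 3/4 * gM 0 := by
  rw [gM_eq, gM_eq]
  have h2 := gIk_rec 2
  have h0 := gIk_rec 0
  norm_num at h2 h0 ⊢
  have h4 : gIk 4 = (3/2) * gIk 2 := by have := gIk_rec 2; norm_num at this; simpa using this
  rw [h4, h0]; ring

noncomputable def gR (n : ℕ) : ℝ := gM n / gM 0

lemma gR_zero : gR 0 = 1 := div_self gM_zero_pos.ne'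
lemma gR_one : gR 1 = 0 := by simp [gR, gM_one]
lemma gR_three : gR 3 = 0 := by simp [gR, gM_three]
lemma gR_two : gR 2 = 1/2 := by
  rw [gR, gM_two, div_right_comm, div_self gM_zero_pos.ne']
lemma gR_four : gR 4 = 3/4 := by
  rw [gR, gM_four, mul_div_assoc, div_self gM_zero_pos.ne', mul_one]
lemma gM_eq_R (n : ℕ) : gM n = gM 0 * gR n := by
  rw [gR, mul_div_cancel₀]; exact gM_zero_pos.ne'

variable {L : ℕ}

def gcnt (i j k l m : Fin L) : ℕ :=
  (if i = m then 1 else 0) + (if j = m then 1 else 0) +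
    (if k = m then 1 else 0) + (if l = m then 1 else 0)

lemma prod_half (a b : Fin L) (hab : a ≠ b) :
    ∏ m, ((if a = m then (1:ℝ)/2 else 1) * (if b = m then (1:ℝ)/2 else 1)) = 1/4 := by
  rw [Finset.prod_mul_distrib, Finset.prod_ite_eq, Finset.prod_ite_eq]
  norm_num

lemma prod_gR (i j k l : Fin L) :
    ∏ m, gR (gcnt i j k l m) =
      ((if i = j then (1:ℝ) else 0) * (if k = l then 1 else 0)
       + (if i = k then (1:ℝ) else 0) * (if j = l then 1 else 0)
       + (if i = l then (1:ℝ) else 0) * (if j = k then 1 else 0)) / 4 := by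
  by_cases hij : i = j
  · subst hij
    by_cases hkl : k = l
    · subst hkl
      by_cases hik : i = k
      · subst hik
        have h : ∀ m ∈ Finset.univ, gR (gcnt i i i i m) = if i = m then (3:ℝ)/4 else 1 := by
          intro m _
          by_cases h : i = m <;> simp [gcnt, h, gR_four, gR_zero]
        rw [Finset.prod_congr rfl h, Finset.prod_ite_eq]
        norm_num
      · have h : ∀ m ∈ Finset.univ, gR (gcnt i i k k m)
            = (if i = m then (1:ℝ)/2 else 1) * (if k = m then (1:ℝ)/2 else 1) := by
          intro m _
          by_cases h1 : i = m <;> by_cases h2 : k = m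
          · exact absurd (h1.trans h2.symm) hik
          all_goals simp [gcnt, h1, h2, gR_two, gR_zero]
        rw [Finset.prod_congr rfl h, prod_half _ _ hik]
        simp [hik]
    · rw [Finset.prod_eq_zero (Finset.mem_univ k)]
      · have h1 : (if k = l then (1:ℝ) else 0) = 0 := by simp [hkl]
        by_cases hik : i = k <;> by_cases hil : i = l
        · exact absurd (hik.symm.trans hil) hkl
        all_goals simp [hik, hil, hkl, Ne.symm hkl]
      · by_cases hik : i = k
        · have : gcnt i i k l k = 3 := by simp [gcnt, hik, Ne.symm hkl]
          rw [this, gR_three]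
        · have : gcnt i i k l k = 1 := by simp [gcnt, hik, Ne.symm hkl]
          rw [this, gR_one]
  · by_cases hik : i = k
    · subst hik
      by_cases hjl : j = l
      · subst hjl
        have h : ∀ m ∈ Finset.univ, gR (gcnt i j i j m)
            = (if i = m then (1:ℝ)/2 else 1) * (if j = m then (1:ℝ)/2 else 1) := by
          intro m _
          by_cases h1 : i = m <;> by_cases h2 : j = m
          · exact absurd (h1.trans h2.symm) hij
          all_goals simp [gcnt, h1, h2, gR_two, gR_zero]
        rw [Finset.prod_congr rfl h, prod_half _ _ hij]
        simp [hij, Ne.symm hij]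
      · rw [Finset.prod_eq_zero (Finset.mem_univ j)]
        · simp [hij, hjl, Ne.symm hij]
        · have : gcnt i j i l j = 1 := by simp [gcnt, hij, Ne.symm hjl]
          rw [this, gR_one]
    · by_cases hil : i = l
      · subst hil
        by_cases hjk : j = k
        · subst hjk
          have h : ∀ m ∈ Finset.univ, gR (gcnt i j j i m)
              = (if i = m then (1:ℝ)/2 else 1) * (if j = m then (1:ℝ)/2 else 1) := by
            intro m _
            by_cases h1 : i = m <;> by_cases h2 : j = m
            · exact absurd (h1.trans h2.symm) hij
            all_goals simp [gcnt, h1, h2, gR_two, gR_zero]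
          rw [Finset.prod_congr rfl h, prod_half _ _ hij]
          simp [hij, Ne.symm hij]
        · rw [Finset.prod_eq_zero (Finset.mem_univ j)]
          · simp [hij, hjk, Ne.symm hij]
          · have : gcnt i j k i j = 1 := by simp [gcnt, hij, Ne.symm hjk]
            rw [this, gR_one]
      · rw [Finset.prod_eq_zero (Finset.mem_univ i)]
        · simp [hij, hik, hil]
        · have : gcnt i j k l i = 1 := by
            simp [gcnt, Ne.symm hij, Ne.symm hik, Ne.symm hil]
          rw [this, gR_one]

lemma prod_pointwise (i j k l : Fin L) (y : Fin L → ℝ) :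
    y i * y j * y k * y l * ∏ m, Real.exp (-(y m)^2)
      = ∏ m, ((y m) ^ (gcnt i j k l m) * Real.exp (-(y m)^2)) := by
  rw [Finset.prod_mul_distrib]
  congr 1
  simp only [gcnt, pow_add, Finset.prod_mul_distrib, pow_ite, pow_one, pow_zero]
  rw [Finset.prod_ite_eq, Finset.prod_ite_eq, Finset.prod_ite_eq, Finset.prod_ite_eq]
  simp

lemma integrable_term (i j k l : Fin L) :
    Integrable (fun y : Fin L → ℝ => y i * y j * y k * y l * ∏ m, Real.exp (-(y m)^2)) := by
  have h : (fun y : Fin L → ℝ => y i * y j * y k * y l * ∏ m, Real.exp (-(y m)^2))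
      = fun y => ∏ m, ((y m) ^ (gcnt i j k l m) * Real.exp (-(y m)^2)) :=
    funext (prod_pointwise i j k l)
  rw [h]
  exact Integrable.fintype_prod (fun m => gInt _)

lemma moment_eval (i j k l : Fin L) :
    ∫ y : Fin L → ℝ, y i * y j * y k * y l * ∏ m, Real.exp (-(y m)^2)
      = gM 0 ^ L * (((if i = j then (1:ℝ) else 0) * (if k = l then 1 else 0)
       + (if i = k then (1:ℝ) else 0) * (if j = l then 1 else 0)
       + (if i = l then (1:ℝ) else 0) * (if j = k then 1 else 0)) / 4) := by
  rw [show (((if i = j then (1:ℝ) else 0) * (if k = l then 1 else 0)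
       + (if i = k then (1:ℝ) else 0) * (if j = l then 1 else 0)
       + (if i = l then (1:ℝ) else 0) * (if j = k then 1 else 0)) / 4) = ∏ m, gR (gcnt i j k l m)
    from (prod_gR i j k l).symm]
  simp_rw [prod_pointwise i j k l]
  rw [MeasureTheory.volume_pi, MeasureTheory.integral_fintype_prod_eq_prod (ι := Fin L)
    (fun m (t : ℝ) => t ^ (gcnt i j k l m) * Real.exp (-t^2))]
  have h : ∀ m, (∫ t : ℝ, t ^ (gcnt i j k l m) * Real.exp (-t^2)) = gM 0 * gR (gcnt i j k l m) :=
    fun m => gM_eq_R _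
  rw [Finset.prod_congr rfl (fun m _ => h m), Finset.prod_mul_distrib, Finset.prod_const]
  simp [Finset.card_univ]

lemma gaussQ_pi (A : Matrix (Fin L) (Fin L) ℝ) :
    ∫ y : Fin L → ℝ, (∑ i, ∑ j, A i j * y i * y j)^2 * ∏ m, Real.exp (-(y m)^2)
      = ((∑ i, A i i)^2 + ((∑ i, ∑ j, A i j * A i j) + (∑ i, ∑ j, A i j * A j i))) / 4
          * gM 0 ^ L := by
  have expand : ∀ y : Fin L → ℝ, (∑ i, ∑ j, A i j * y i * y j)^2 * ∏ m, Real.exp (-(y m)^2)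
      = ∑ z : (Fin L × Fin L) × (Fin L × Fin L),
          A z.1.1 z.1.2 * A z.2.1 z.2.2 *
            (y z.1.1 * y z.1.2 * y z.2.1 * y z.2.2 * ∏ m, Real.exp (-(y m)^2)) := by
    intro y
    rw [← Fintype.sum_prod_type' (f := fun i j => A i j * y i * y j), sq, Finset.sum_mul_sum,
      ← Fintype.sum_prod_type', Finset.sum_mul]
    exact Finset.sum_congr rfl (fun z _ => by ring)
  simp_rw [expand]
  rw [integral_finset_sum _ (fun z _ => ((integrable_term z.1.1 z.1.2 z.2.1 z.2.2).const_mul _))]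
  simp_rw [integral_const_mul, moment_eval]
  rw [Fintype.sum_prod_type]
  simp_rw [Fintype.sum_prod_type]
  have split : ∀ i j k l : Fin L,
      A i j * A k l * (gM 0 ^ L * (((if i = j then (1:ℝ) else 0) * (if k = l then 1 else 0)
       + (if i = k then (1:ℝ) else 0) * (if j = l then 1 else 0)
       + (if i = l then (1:ℝ) else 0) * (if j = k then 1 else 0)) / 4))
      = gM 0 ^ L / 4 * ((if i = j then A i j else 0) * (if k = l then A k l else 0))
        + (gM 0 ^ L / 4 * (if j = l then (if i = k then A i j * A k l else 0) else 0)
        + gM 0 ^ L / 4 * (if i = l then (if j = k then A i j * A k l else 0) else 0)) := by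
    intro i j k l; split_ifs <;> ring
  simp_rw [split, Finset.sum_add_distrib, ← Finset.mul_sum]
  have e2 : (∑ i : Fin L, ∑ j : Fin L, ∑ k : Fin L, ∑ l : Fin L,
      (if j = l then (if i = k then A i j * A k l else 0) else 0))
      = ∑ i : Fin L, ∑ j : Fin L, A i j * A i j := by
    simp [Finset.sum_ite_eq]
  have e3 : (∑ i : Fin L, ∑ j : Fin L, ∑ k : Fin L, ∑ l : Fin L,
      (if i = l then (if j = k then A i j * A k l else 0) else 0))
      = ∑ i : Fin L, ∑ j : Fin L, A i j * A j i := by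
    simp [Finset.sum_ite_eq]
  have e1 : (∑ i : Fin L, ∑ j : Fin L, ((if i = j then A i j else 0) *
      (∑ k : Fin L, ∑ l : Fin L, if k = l then A k l else 0)))
      = (∑ i : Fin L, A i i)^2 := by
    simp_rw [← Finset.sum_mul]
    simp [Finset.sum_ite_eq, sq]
  rw [e1, e2, e3]
  ring

lemma norm_sq_eq_sum (x : EuclideanSpace ℝ (Fin L)) : ‖x‖^2 = ∑ i, (x i)^2 := by
  rw [EuclideanSpace.norm_eq, Real.sq_sqrt (Finset.sum_nonneg fun i _ => by positivity)]
  simp [sq_abs]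

lemma gaussQ_euc (A : Matrix (Fin L) (Fin L) ℝ) :
    ∫ x : EuclideanSpace ℝ (Fin L), (∑ i, ∑ j, A i j * x i * x j)^2 * Real.exp (-‖x‖^2)
      = ((∑ i, A i i)^2 + ((∑ i, ∑ j, A i j * A i j) + (∑ i, ∑ j, A i j * A j i))) / 4
          * gM 0 ^ L := by
  rw [← gaussQ_pi A]
  have h := (EuclideanSpace.volume_preserving_symm_measurableEquiv_toLp (Fin L)).symm
  rw [← h.integral_comp (MeasurableEquiv.measurableEmbedding _)]
  refine integral_congr_ae (Filter.Eventually.of_forall fun y => ?_)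
  have hy : ∀ i, ((MeasurableEquiv.toLp 2 (Fin L → ℝ)).symm.symm y) i = y i := fun i => rfl
  have hn : ‖(MeasurableEquiv.toLp 2 (Fin L → ℝ)).symm.symm y‖^2 = ∑ i, (y i)^2 := by
    rw [norm_sq_eq_sum]; simp [hy]
  simp only [Function.comp_apply, hy, hn]
  rw [← Real.exp_sum]
  congr 2
  simp

lemma exp_norm_int : Integrable (fun x : EuclideanSpace ℝ (Fin L) => Real.exp (-‖x‖^2)) := by
  have h := (EuclideanSpace.volume_preserving_symm_measurableEquiv_toLp (Fin L)).symm
  rw [← h.integrable_comp_emb (MeasurableEquiv.measurableEmbedding _)]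
  have : ((fun x : EuclideanSpace ℝ (Fin L) => Real.exp (-‖x‖^2)) ∘
      (MeasurableEquiv.toLp 2 (Fin L → ℝ)).symm.symm)
      = fun y : Fin L → ℝ => ∏ m, Real.exp (-(y m)^2) := by
    funext y
    have hn : ‖(MeasurableEquiv.toLp 2 (Fin L → ℝ)).symm.symm y‖^2 = ∑ i, (y i)^2 := by
      rw [norm_sq_eq_sum]; exact Finset.sum_congr rfl fun i _ => rfl
    simp only [Function.comp_apply, hn, ← Real.exp_sum]
    congr 1
    simp
  rw [this]
  exact Integrable.fintype_prod (f := fun (m : Fin L) (t : ℝ) => Real.exp (-t^2))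
    (fun m => by simpa using gInt 0)

lemma gauss_norm_int :
    ∫ x : EuclideanSpace ℝ (Fin L), Real.exp (-‖x‖^2) = gM 0 ^ L := by
  have h := (EuclideanSpace.volume_preserving_symm_measurableEquiv_toLp (Fin L)).symm
  rw [← h.integral_comp (MeasurableEquiv.measurableEmbedding _)]
  have heq : ((fun x : EuclideanSpace ℝ (Fin L) => Real.exp (-‖x‖^2)) ∘
      (MeasurableEquiv.toLp 2 (Fin L → ℝ)).symm.symm)
      = fun y : Fin L → ℝ => ∏ m, Real.exp (-(y m)^2) := by
    funext y
    have hn : ‖(MeasurableEquiv.toLp 2 (Fin L → ℝ)).symm.symm y‖^2 = ∑ i, (y i)^2 := by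
      rw [norm_sq_eq_sum]; exact Finset.sum_congr rfl fun i _ => rfl
    simp only [Function.comp_apply, hn, ← Real.exp_sum]
    congr 1
    simp
  rw [show (fun x : Fin L → ℝ => Real.exp (-‖(MeasurableEquiv.toLp 2 (Fin L → ℝ)).symm.symm x‖ ^ 2)) = fun y : Fin L → ℝ => ∏ m, Real.exp (-(y m)^2) from heq, MeasureTheory.volume_pi, MeasureTheory.integral_fintype_prod_eq_pow (ι := Fin L) (fun t : ℝ => Real.exp (-t^2))]
  have : (∫ t : ℝ, Real.exp (-t^2)) = gM 0 := by simp [gM]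
  rw [this]
  simp

lemma toSphere_transfer (hL : 1 ≤ L) (d : ℕ) (H : EuclideanSpace ℝ (Fin L) → ℝ)
    (hH : ∀ (r : ℝ), 0 < r → ∀ x : EuclideanSpace ℝ (Fin L), H (r • x) = r^d * H x) :
    (∫ u : sphere (0 : EuclideanSpace ℝ (Fin L)) 1, H ↑u
        ∂(volume : Measure (EuclideanSpace ℝ (Fin L))).toSphere)
      * gIk (Module.finrank ℝ (EuclideanSpace ℝ (Fin L)) - 1 + d)
      = ∫ x : EuclideanSpace ℝ (Fin L), H x * Real.exp (-‖x‖^2) := by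
  haveI : Nontrivial (EuclideanSpace ℝ (Fin L)) :=
    Module.nontrivial_of_finrank_pos (R := ℝ)
      (by rw [finrank_euclideanSpace_fin]; omega)
  set μ := (volume : Measure (EuclideanSpace ℝ (Fin L))) with hμ
  set n := Module.finrank ℝ (EuclideanSpace ℝ (Fin L)) - 1 with hn
  have h1 : ∫ x, H x * Real.exp (-‖x‖^2) ∂μ
      = ∫ x : ({0}ᶜ : Set (EuclideanSpace ℝ (Fin L))), H x.1 * Real.exp (-‖x.1‖^2)
          ∂(μ.comap Subtype.val) := by
    rw [integral_subtype_comap (measurableSet_singleton 0).compl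
      (fun x => H x * Real.exp (-‖x‖^2)), MeasureTheory.restrict_compl_singleton]
  have h2 := (μ.measurePreserving_homeomorphUnitSphereProd).integral_comp
      (Homeomorph.measurableEmbedding _)
      (fun z : sphere (0 : EuclideanSpace ℝ (Fin L)) 1 × Set.Ioi (0:ℝ) =>
        H ↑z.1 * ((z.2:ℝ)^d * Real.exp (-(z.2:ℝ)^2)))
  have h3 : ∀ x : ({0}ᶜ : Set (EuclideanSpace ℝ (Fin L))),
      H ↑((homeomorphUnitSphereProd (EuclideanSpace ℝ (Fin L)) x).1)
        * ((((homeomorphUnitSphereProd (EuclideanSpace ℝ (Fin L)) x).2 : ℝ))^d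
          * Real.exp (-(((homeomorphUnitSphereProd (EuclideanSpace ℝ (Fin L)) x).2:ℝ))^2))
      = H x.1 * Real.exp (-‖x.1‖^2) := by
    intro x
    have hx : x.1 ≠ 0 := x.2
    have hnorm : (0:ℝ) < ‖x.1‖ := norm_pos_iff.2 hx
    simp only [homeomorphUnitSphereProd_apply_fst_coe, homeomorphUnitSphereProd_apply_snd_coe]
    rw [hH _ (inv_pos.2 hnorm) x.1, inv_pow]
    field_simp
  have h5 : ∫ r : Set.Ioi (0:ℝ), ((r:ℝ)^d * Real.exp (-(r:ℝ)^2)) ∂(Measure.volumeIoiPow n)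
      = gIk (n + d) := by
    simp only [Measure.volumeIoiPow, ENNReal.ofReal]
    rw [integral_withDensity_eq_integral_smul
      ((measurable_subtype_coe.pow_const _).real_toNNReal),
      integral_subtype_comap measurableSet_Ioi
        (fun a : ℝ => Real.toNNReal (a ^ n) • ((a:ℝ)^d * Real.exp (-(a:ℝ)^2)))]
    rw [gIk]
    refine setIntegral_congr_fun measurableSet_Ioi (fun x hx => ?_)
    have hx' : (0:ℝ) < x := hx
    rw [NNReal.smul_def, Real.coe_toNNReal _ (pow_nonneg hx'.le _), smul_eq_mul, pow_add]
    ring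
  calc (∫ u : sphere (0 : EuclideanSpace ℝ (Fin L)) 1, H ↑u ∂μ.toSphere) * gIk (n + d)
      = ∫ z : sphere (0 : EuclideanSpace ℝ (Fin L)) 1 × Set.Ioi (0:ℝ),
          H ↑z.1 * ((z.2:ℝ)^d * Real.exp (-(z.2:ℝ)^2))
          ∂(μ.toSphere.prod (Measure.volumeIoiPow n)) := by
        rw [integral_prod_mul (fun u : sphere (0 : EuclideanSpace ℝ (Fin L)) 1 => H ↑u)
          (fun r : Set.Ioi (0:ℝ) => (r:ℝ)^d * Real.exp (-(r:ℝ)^2)), h5]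
    _ = ∫ x : ({0}ᶜ : Set (EuclideanSpace ℝ (Fin L))), H x.1 * Real.exp (-‖x.1‖^2)
          ∂(μ.comap Subtype.val) := by
        rw [← h2]
        exact integral_congr_ae (Filter.Eventually.of_forall fun x => h3 x)
    _ = ∫ x : EuclideanSpace ℝ (Fin L), H x * Real.exp (-‖x‖^2) ∂μ := h1.symm

/-- The uniform (normalized surface) probability measure on the unit sphere of
`EuclideanSpace ℝ (Fin L)`. -/
noncomputable def sphereUniform (L : ℕ) :
    Measure (sphere (0 : EuclideanSpace ℝ (Fin L)) 1) :=
  ((volume : Measure (EuclideanSpace ℝ (Fin L))).toSphere Set.univ)⁻¹ •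
    (volume : Measure (EuclideanSpace ℝ (Fin L))).toSphere

lemma sphereUniform_integral (hL : 1 ≤ L) (d : ℕ) (H : EuclideanSpace ℝ (Fin L) → ℝ)
    (hH : ∀ (r : ℝ), 0 < r → ∀ x : EuclideanSpace ℝ (Fin L), H (r • x) = r^d * H x) :
    ∫ u : sphere (0 : EuclideanSpace ℝ (Fin L)) 1, H ↑u ∂(sphereUniform L)
      = gIk (L-1) * (∫ x : EuclideanSpace ℝ (Fin L), H x * Real.exp (-‖x‖^2))
          / (gIk (L-1+d) * gM 0 ^ L) := by
  have hdim : Module.finrank ℝ (EuclideanSpace ℝ (Fin L)) - 1 = L - 1 := by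
    rw [finrank_euclideanSpace_fin]
  have hnorm := toSphere_transfer (L := L) hL 0 (fun _ => 1)
    (by intro r hr x; simp)
  rw [hdim, add_zero] at hnorm
  have hone : (∫ _u : sphere (0 : EuclideanSpace ℝ (Fin L)) 1, (1:ℝ)
      ∂(volume : Measure (EuclideanSpace ℝ (Fin L))).toSphere)
      = ((volume : Measure (EuclideanSpace ℝ (Fin L))).toSphere Set.univ).toReal := by
    simp [measureReal_def]
  have hexp : (∫ x : EuclideanSpace ℝ (Fin L), (1:ℝ) * Real.exp (-‖x‖^2)) = gM 0 ^ L := by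
    simp_rw [one_mul]
    exact gauss_norm_int
  rw [hone, hexp] at hnorm
  -- hnorm : t * gIk (L-1) = gM 0 ^ L
  set t := ((volume : Measure (EuclideanSpace ℝ (Fin L))).toSphere Set.univ).toReal with ht
  have hgM : (0:ℝ) < gM 0 ^ L := pow_pos gM_zero_pos L
  have htpos : 0 < t := by
    rcases lt_or_ge 0 t with h | h
    · exact h
    · exfalso; nlinarith [gIk_pos (L-1)]
  have hmain := toSphere_transfer (L := L) hL d H hH
  rw [hdim] at hmain
  rw [sphereUniform, integral_smul_measure, ENNReal.toReal_inv, ← ht, smul_eq_mul,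
    ← hmain]
  have h1 : t = gM 0 ^ L / gIk (L-1) := by
    rw [eq_div_iff (gIk_pos (L-1)).ne']
    exact hnorm
  rw [h1]
  have h2 := gIk_pos (L-1)
  have h3 := gIk_pos (L-1+d)
  field_simp

lemma sphere_q_sq (hL : 1 ≤ L) (A : Matrix (Fin L) (Fin L) ℝ) :
    ∫ u : sphere (0 : EuclideanSpace ℝ (Fin L)) 1,
        (∑ i, ∑ j, A i j * (↑u : EuclideanSpace ℝ (Fin L)) i
          * (↑u : EuclideanSpace ℝ (Fin L)) j)^2 ∂(sphereUniform L)
      = ((∑ i, A i i)^2 + ((∑ i, ∑ j, A i j * A i j) + (∑ i, ∑ j, A i j * A j i)))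
          / ((L:ℝ) * ((L:ℝ)+2)) := by
  have hH : ∀ (r : ℝ), 0 < r → ∀ x : EuclideanSpace ℝ (Fin L),
      (fun x : EuclideanSpace ℝ (Fin L) => (∑ i, ∑ j, A i j * x i * x j)^2) (r • x)
        = r^4 * (fun x : EuclideanSpace ℝ (Fin L) => (∑ i, ∑ j, A i j * x i * x j)^2) x := by
    intro r hr x
    have h : (∑ i, ∑ j, A i j * (r • x) i * (r • x) j)
        = r^2 * ∑ i, ∑ j, A i j * x i * x j := by
      rw [Finset.mul_sum]
      refine Finset.sum_congr rfl fun i _ => ?_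
      rw [Finset.mul_sum]
      refine Finset.sum_congr rfl fun j _ => ?_
      have : (r • x) i = r * x i := rfl
      have h2 : (r • x) j = r * x j := rfl
      rw [this, h2]; ring
    simp only [h]; ring
  have h := sphereUniform_integral hL 4
    (fun x : EuclideanSpace ℝ (Fin L) => (∑ i, ∑ j, A i j * x i * x j)^2) hH
  rw [gaussQ_euc] at h
  refine h.trans ?_
  obtain ⟨n, rfl⟩ : ∃ n, L = n + 1 := ⟨L-1, by omega⟩
  have hn1 : n + 1 - 1 = n := rfl
  rw [hn1]
  have e4 : gIk (n + 4) = (((n:ℝ)+3)/2) * (((n:ℝ)+1)/2) * gIk n := by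
    have h1 := gIk_rec (n+2)
    have h2 := gIk_rec n
    push_cast at h1 h2 ⊢
    rw [show n+2+2 = n+4 from rfl] at h1
    rw [h1, h2]; ring
  rw [e4]
  have h2 := gIk_pos n
  have hgM : (0:ℝ) < gM 0 ^ (n+1) := pow_pos gM_zero_pos _
  have hn3 : ((n:ℝ)+3) ≠ 0 := by positivity
  have hn1' : ((n:ℝ)+1) ≠ 0 := by positivity
  push_cast
  field_simp
  ring

lemma inner_form (T : Matrix (Fin L) (Fin L) ℝ) (u x : EuclideanSpace ℝ (Fin L)) :
    ⟪u, Matrix.toEuclideanLin T x⟫ = ∑ j, (∑ i, u i * T i j) * x j := by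
  have h1 : ⟪u, Matrix.toEuclideanLin T x⟫ = ∑ i, u i * (∑ j, T i j * x j) := by
    rw [PiLp.inner_apply]
    refine Finset.sum_congr rfl fun i _ => ?_
    simp [Matrix.toEuclideanLin_apply, Matrix.mulVec, dotProduct,
      mul_comm]
  rw [h1]
  simp_rw [Finset.mul_sum]
  rw [Finset.sum_comm]
  simp_rw [Finset.sum_mul]
  exact Finset.sum_congr rfl fun j _ => Finset.sum_congr rfl fun i _ => by ring

theorem stmt_14x (hL : 1 ≤ L) (T : Matrix (Fin L) (Fin L) ℝ) :
    (∫ u, ∫ v,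
        ⟪((u : Metric.sphere (0 : EuclideanSpace ℝ (Fin L)) 1) : EuclideanSpace ℝ (Fin L)),
          Matrix.toEuclideanLin T ((v : Metric.sphere (0 : EuclideanSpace ℝ (Fin L)) 1) :
            EuclideanSpace ℝ (Fin L))⟫ ^ 4
        ∂(sphereUniform L) ∂(sphereUniform L)) =
      (3 / ((L : ℝ) ^ 2 * ((L : ℝ) + 2) ^ 2)) *
        (2 * ((Tᵀ * T) * (Tᵀ * T)).trace + ((Tᵀ * T).trace) ^ 2) := by
  set C : Matrix (Fin L) (Fin L) ℝ := T * Tᵀ with hCdef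
  have hCapp : ∀ i k, C i k = ∑ j, T i j * T k j := by
    intro i k
    rw [hCdef, Matrix.mul_apply]
    exact Finset.sum_congr rfl fun j _ => by rw [Matrix.transpose_apply]
  have hCsymm : ∀ i k, C i k = C k i := by
    intro i k; rw [hCapp, hCapp]
    exact Finset.sum_congr rfl fun j _ => by ring
  have hLpos : (0:ℝ) < L := by exact_mod_cast hL
  have hL2 : (0:ℝ) < (L:ℝ) + 2 := by linarith
  have inner_step : ∀ u : Metric.sphere (0 : EuclideanSpace ℝ (Fin L)) 1,
      (∫ v, ⟪((u : Metric.sphere (0 : EuclideanSpace ℝ (Fin L)) 1) : EuclideanSpace ℝ (Fin L)),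
          Matrix.toEuclideanLin T ((v : Metric.sphere (0 : EuclideanSpace ℝ (Fin L)) 1) :
            EuclideanSpace ℝ (Fin L))⟫ ^ 4 ∂(sphereUniform L))
      = 3 / ((L:ℝ) * ((L:ℝ)+2)) *
          (∑ i, ∑ j, C i j * ((u : EuclideanSpace ℝ (Fin L)) i)
            * ((u : EuclideanSpace ℝ (Fin L)) j))^2 := by
    intro u
    set w : Fin L → ℝ := fun j => ∑ i, (u : EuclideanSpace ℝ (Fin L)) i * T i j with hw
    set A : Matrix (Fin L) (Fin L) ℝ := Matrix.of (fun j l => w j * w l) with hA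
    have step1 : ∀ v : Metric.sphere (0 : EuclideanSpace ℝ (Fin L)) 1,
        ⟪((u : Metric.sphere (0 : EuclideanSpace ℝ (Fin L)) 1) : EuclideanSpace ℝ (Fin L)),
          Matrix.toEuclideanLin T ((v : Metric.sphere (0 : EuclideanSpace ℝ (Fin L)) 1) :
            EuclideanSpace ℝ (Fin L))⟫ ^ 4
        = (∑ j, ∑ l, A j l * ((v : EuclideanSpace ℝ (Fin L)) j)
            * ((v : EuclideanSpace ℝ (Fin L)) l))^2 := by
      intro v
      rw [inner_form]
      have expand : (∑ j, w j * ((v : EuclideanSpace ℝ (Fin L)) j))^2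
          = ∑ j, ∑ l, A j l * ((v : EuclideanSpace ℝ (Fin L)) j)
              * ((v : EuclideanSpace ℝ (Fin L)) l) := by
        rw [sq, Finset.sum_mul_sum]
        exact Finset.sum_congr rfl fun j _ => Finset.sum_congr rfl fun l _ => by
          rw [hA]; simp only [Matrix.of_apply]; ring
      calc (∑ j, w j * ((v : EuclideanSpace ℝ (Fin L)) j)) ^ 4
          = ((∑ j, w j * ((v : EuclideanSpace ℝ (Fin L)) j))^2)^2 := by ring
        _ = _ := by rw [expand]
    have hs : (∑ j, w j ^ 2) = ∑ i, ∑ k, C i k * ((u : EuclideanSpace ℝ (Fin L)) i)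
        * ((u : EuclideanSpace ℝ (Fin L)) k) := by
      have h1 : ∀ j, w j ^ 2 = ∑ i, ∑ k,
          ((u : EuclideanSpace ℝ (Fin L)) i * T i j)
            * ((u : EuclideanSpace ℝ (Fin L)) k * T k j) := by
        intro j
        rw [hw, sq, Finset.sum_mul_sum]
      simp_rw [h1]
      rw [Finset.sum_comm]
      refine Finset.sum_congr rfl fun i _ => ?_
      rw [Finset.sum_comm]
      refine Finset.sum_congr rfl fun k _ => ?_
      rw [hCapp, Finset.sum_mul, Finset.sum_mul]
      exact Finset.sum_congr rfl fun j _ => by ring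
    have hAX : (∑ j, A j j) = ∑ j, w j ^ 2 :=
      Finset.sum_congr rfl fun j _ => by rw [hA]; simp only [Matrix.of_apply]; ring
    have hAX2 : (∑ j, ∑ l, A j l * A j l) = (∑ j, w j^2)^2 := by
      rw [sq, Finset.sum_mul_sum]
      exact Finset.sum_congr rfl fun j _ => Finset.sum_congr rfl fun l _ => by
        rw [hA]; simp only [Matrix.of_apply]; ring
    have hAX3 : (∑ j, ∑ l, A j l * A l j) = (∑ j, w j^2)^2 := by
      rw [sq, Finset.sum_mul_sum]
      exact Finset.sum_congr rfl fun j _ => Finset.sum_congr rfl fun l _ => by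
        rw [hA]; simp only [Matrix.of_apply]; ring
    calc (∫ v, ⟪((u : Metric.sphere (0 : EuclideanSpace ℝ (Fin L)) 1) : EuclideanSpace ℝ (Fin L)),
          Matrix.toEuclideanLin T ((v : Metric.sphere (0 : EuclideanSpace ℝ (Fin L)) 1) :
            EuclideanSpace ℝ (Fin L))⟫ ^ 4 ∂(sphereUniform L))
        = ∫ v : Metric.sphere (0 : EuclideanSpace ℝ (Fin L)) 1,
            (∑ j, ∑ l, A j l * ((v : EuclideanSpace ℝ (Fin L)) j)
              * ((v : EuclideanSpace ℝ (Fin L)) l))^2 ∂(sphereUniform L) :=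
          integral_congr_ae (Filter.Eventually.of_forall fun v => step1 v)
      _ = ((∑ j, A j j)^2 + ((∑ j, ∑ l, A j l * A j l) + (∑ j, ∑ l, A j l * A l j)))
            / ((L:ℝ) * ((L:ℝ)+2)) := sphere_q_sq hL A
      _ = _ := by rw [hAX, hAX2, hAX3, hs]; ring
  have t0 : (∑ i, C i i) = (Tᵀ * T).trace := by
    have h : (∑ i, C i i) = C.trace := by simp [Matrix.trace, Matrix.diag]
    rw [h, hCdef, Matrix.trace_mul_comm]
  have t2 : (∑ i, ∑ j, C i j * C j i) = ((Tᵀ * T) * (Tᵀ * T)).trace := by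
    have h : (∑ i, ∑ j, C i j * C j i) = (C * C).trace := by
      simp [Matrix.trace, Matrix.diag, Matrix.mul_apply]
    rw [h, hCdef, show (T * Tᵀ) * (T * Tᵀ) = T * (Tᵀ * T * Tᵀ) by
      simp only [Matrix.mul_assoc],
      Matrix.trace_mul_comm, show (Tᵀ * T * Tᵀ) * T = (Tᵀ * T) * (Tᵀ * T) by
      simp only [Matrix.mul_assoc]]
  have t3 : (∑ i, ∑ j, C i j * C i j) = ((Tᵀ * T) * (Tᵀ * T)).trace := by
    rw [← t2]
    exact Finset.sum_congr rfl fun i _ => Finset.sum_congr rfl fun j _ => by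
      rw [hCsymm j i]
  calc (∫ u, ∫ v,
        ⟪((u : Metric.sphere (0 : EuclideanSpace ℝ (Fin L)) 1) : EuclideanSpace ℝ (Fin L)),
          Matrix.toEuclideanLin T ((v : Metric.sphere (0 : EuclideanSpace ℝ (Fin L)) 1) :
            EuclideanSpace ℝ (Fin L))⟫ ^ 4
        ∂(sphereUniform L) ∂(sphereUniform L))
      = ∫ u : Metric.sphere (0 : EuclideanSpace ℝ (Fin L)) 1,
          3 / ((L:ℝ) * ((L:ℝ)+2)) *
          (∑ i, ∑ j, C i j * ((u : EuclideanSpace ℝ (Fin L)) i)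
            * ((u : EuclideanSpace ℝ (Fin L)) j))^2 ∂(sphereUniform L) :=
        integral_congr_ae (Filter.Eventually.of_forall fun u => inner_step u)
    _ = 3 / ((L:ℝ) * ((L:ℝ)+2)) * ∫ u : Metric.sphere (0 : EuclideanSpace ℝ (Fin L)) 1,
          (∑ i, ∑ j, C i j * ((u : EuclideanSpace ℝ (Fin L)) i)
            * ((u : EuclideanSpace ℝ (Fin L)) j))^2 ∂(sphereUniform L) :=
        integral_const_mul _ _
    _ = 3 / ((L:ℝ) * ((L:ℝ)+2)) *
          (((∑ i, C i i)^2 + ((∑ i, ∑ j, C i j * C i j) + (∑ i, ∑ j, C i j * C j i)))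
            / ((L:ℝ) * ((L:ℝ)+2))) := by rw [sphere_q_sq hL C]
    _ = (3 / ((L : ℝ) ^ 2 * ((L : ℝ) + 2) ^ 2)) *
        (2 * ((Tᵀ * T) * (Tᵀ * T)).trace + ((Tᵀ * T).trace) ^ 2) := by
        rw [t0, t2, t3]
        field_simp
        ring

/-- the fourth moment of `⟨u, Tv⟩` over the uniform sphere measures equals
`(3/(L²(L+2)²))·(2·tr((TᵀT)²) + (tr(TᵀT))²)`. -/
theorem stmt_14 (L : ℕ) (hL : 1 ≤ L) (T : Matrix (Fin L) (Fin L) ℝ) :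
    (∫ u, ∫ v,
        ⟪((u : Metric.sphere (0 : EuclideanSpace ℝ (Fin L)) 1) : EuclideanSpace ℝ (Fin L)),
          Matrix.toEuclideanLin T ((v : Metric.sphere (0 : EuclideanSpace ℝ (Fin L)) 1) :
            EuclideanSpace ℝ (Fin L))⟫ ^ 4
        ∂(sphereUniform L) ∂(sphereUniform L)) =
      (3 / ((L : ℝ) ^ 2 * ((L : ℝ) + 2) ^ 2)) *
        (2 * ((Tᵀ * T) * (Tᵀ * T)).trace + ((Tᵀ * T).trace) ^ 2) := by
  exact stmt_14x hL T
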